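/- Let k be an algebraically closed field of characteristic 2. Then the Witt–Jacobson Lie algebra W(2;1) = Der(k[X,Y]/(X²,Y²)) is isomorphic, as a Lie algebra over k, to sl_3(k). -/

import Mathlib

/-!
# Statement 15 (Premet, §4.4)

Let `k` be an algebraically closed field of characteristic `2`.  Then the Witt–Jacobson
Lie algebra `W(2;1) = Der (k[X,Y]/(X², Y²))` is isomorphic, as a Lie algebra over `k`,
to `sl₃(k)`.
-/

open MvPolynomial

set_option synthInstance.maxHeartbeats 1000000
set_option maxHeartbeats 1000000
set_option linter.unusedSectionVars false

/-- the truncated polynomial ring `O(2;1) = k[X,Y]/(X^p, Y^p)` -/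
abbrev TruncatedPoly (k : Type) [Field k] (p : ℕ) : Type :=
  MvPolynomial (Fin 2) k ⧸
    (Ideal.span (Set.range fun i : Fin 2 => (X i : MvPolynomial (Fin 2) k) ^ p))

/-- the Witt–Jacobson algebra `W(2;1) = Der (O(2;1))` -/
abbrev WittJacobson (k : Type) [Field k] (p : ℕ) : Type :=
  Derivation k (TruncatedPoly k p) (TruncatedPoly k p)

namespace WJ2

variable (k : Type) [Field k]

noncomputable section

abbrev PP := MvPolynomial (Fin 2) k

abbrev Ik : Ideal (PP k) := Ideal.span (Set.range fun i : Fin 2 => (X i : PP k) ^ 2)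

abbrev OO := TruncatedPoly k 2

def xx : OO k := Ideal.Quotient.mk _ (X 0)
def yy : OO k := Ideal.Quotient.mk _ (X 1)

def mon : Fin 4 → (Fin 2 →₀ ℕ) :=
  ![0, Finsupp.single 0 1, Finsupp.single 1 1, Finsupp.single 0 1 + Finsupp.single 1 1]

def vv : Fin 4 → OO k := ![1, xx k, yy k, xx k * yy k]

def cP : PP k →ₗ[k] (Fin 4 → k) := LinearMap.pi (fun i => lcoeff k (mon i))

lemma Ik_eq : Ik k = Ideal.span {(X 0 : PP k) ^ 2, (X 1 : PP k) ^ 2} := by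
  unfold Ik
  congr 1
  ext p
  constructor
  · rintro ⟨i, rfl⟩
    fin_cases i <;> simp
  · rintro (rfl | rfl)
    · exact ⟨0, rfl⟩
    · exact ⟨1, rfl⟩

lemma not_le_mon (i : Fin 2) (j : Fin 4) : ¬ Finsupp.single i 2 ≤ mon j := by
  rw [Finsupp.single_le_iff]
  fin_cases i <;> fin_cases j <;>
    simp [mon, Finsupp.single_apply]

lemma cP_Ik (p : PP k) (hp : p ∈ Ik k) : cP k p = 0 := by
  rw [Ik_eq, Ideal.mem_span_pair] at hp
  obtain ⟨u, v, rfl⟩ := hp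
  funext j
  simp only [cP, LinearMap.pi_apply, lcoeff_apply, Pi.zero_apply, map_add]
  rw [X_pow_eq_monomial, X_pow_eq_monomial, coeff_mul_monomial', coeff_mul_monomial']
  rw [if_neg (not_le_mon 0 j), if_neg (not_le_mon 1 j)]
  simp

def cc : OO k →ₗ[k] (Fin 4 → k) :=
  (Submodule.liftQ ((Ik k).restrictScalars k) (cP k)
      (fun p hp => cP_Ik k p hp)).comp
    (Submodule.Quotient.restrictScalarsEquiv k (Ik k)).symm.toLinearMap

lemma cc_mk (p : PP k) : cc k (Ideal.Quotient.mk _ p) = cP k p := rfl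

lemma mon_inj : Function.Injective mon := by
  intro i j h
  fin_cases i <;> fin_cases j <;>
    first
      | rfl
      | (exfalso; apply_fun (fun f => ((f 0 : ℕ), (f 1 : ℕ))) at h;
         simp [mon, Finsupp.single_apply, Prod.ext_iff] at h)

lemma X_eq_mono (i : Fin 2) : (X i : PP k) = monomial (Finsupp.single i 1) 1 := by
  rw [← C_mul_X_eq_monomial, map_one, one_mul]

lemma vv_eq_monomial (i : Fin 4) : vv k i = Ideal.Quotient.mk _ (monomial (mon i) (1:k)) := by
  fin_cases i <;>
    simp [vv, mon, xx, yy, monomial_zero', X_eq_mono, monomial_mul, ← map_mul]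

lemma cv (i j : Fin 4) : cc k (vv k i) j = if i = j then 1 else 0 := by
  rw [vv_eq_monomial, cc_mk]
  simp only [cP, LinearMap.pi_apply, lcoeff_apply, coeff_monomial]
  by_cases h : i = j
  · subst h; simp
  · rw [if_neg (fun hm => h (mon_inj hm)), if_neg h]

lemma x_sq : xx k * xx k = 0 := by
  rw [xx, ← map_mul, ← sq, Ideal.Quotient.eq_zero_iff_mem]
  exact Ideal.subset_span ⟨0, rfl⟩

lemma y_sq : yy k * yy k = 0 := by
  rw [yy, ← map_mul, ← sq, Ideal.Quotient.eq_zero_iff_mem]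
  exact Ideal.subset_span ⟨1, rfl⟩

lemma mul_vv_x (i : Fin 4) : xx k * vv k i ∈ Submodule.span k (Set.range (vv k)) := by
  fin_cases i
  · show xx k * 1 ∈ _
    rw [mul_one]
    exact Submodule.subset_span ⟨1, rfl⟩
  · show xx k * xx k ∈ _
    rw [x_sq]; exact zero_mem _
  · show xx k * yy k ∈ _
    exact Submodule.subset_span ⟨3, rfl⟩
  · show xx k * (xx k * yy k) ∈ _
    rw [← mul_assoc, x_sq, zero_mul]; exact zero_mem _

lemma mul_vv_y (i : Fin 4) : yy k * vv k i ∈ Submodule.span k (Set.range (vv k)) := by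
  fin_cases i
  · show yy k * 1 ∈ _
    rw [mul_one]
    exact Submodule.subset_span ⟨2, rfl⟩
  · show yy k * xx k ∈ _
    rw [mul_comm]
    exact Submodule.subset_span ⟨3, rfl⟩
  · show yy k * yy k ∈ _
    rw [y_sq]; exact zero_mem _
  · show yy k * (xx k * yy k) ∈ _
    rw [mul_comm (xx k), ← mul_assoc, y_sq, zero_mul]; exact zero_mem _

lemma mul_mem_span {z : OO k} (hz : z ∈ Submodule.span k (Set.range (vv k))) (i : Fin 2) :
    Ideal.Quotient.mk (Ik k) (X i) * z ∈ Submodule.span k (Set.range (vv k)) := by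
  induction hz using Submodule.span_induction with
  | mem w hw =>
      obtain ⟨j, rfl⟩ := hw
      fin_cases i
      · exact mul_vv_x k j
      · exact mul_vv_y k j
  | zero => rw [mul_zero]; exact zero_mem _
  | add a b _ _ ha hb => rw [mul_add]; exact add_mem ha hb
  | smul c a _ ha => rw [mul_smul_comm]; exact Submodule.smul_mem _ _ ha

lemma span_vv : Submodule.span k (Set.range (vv k)) = ⊤ := by
  rw [eq_top_iff]
  rintro z -
  obtain ⟨p, rfl⟩ := Ideal.Quotient.mk_surjective z
  induction p using MvPolynomial.induction_on with
  | C a =>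
      have h : Ideal.Quotient.mk (Ik k) (C a) = a • (1 : OO k) := by
        rw [show (C a : PP k) = a • 1 by rw [smul_eq_C_mul, mul_one]]
        rw [← Ideal.Quotient.mkₐ_eq_mk k, map_smul, map_one]
      rw [h]
      exact Submodule.smul_mem _ _ (Submodule.subset_span ⟨0, rfl⟩)
  | add p q hp hq => rw [map_add]; exact add_mem hp hq
  | mul_X p i hp => rw [map_mul, mul_comm]; exact mul_mem_span k hp i

def BB : Module.Basis (Fin 4) k (OO k) := by
  refine Module.Basis.mk (v := vv k) ?_ (by rw [span_vv])
  apply LinearIndependent.of_comp (cc k)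
  have he : (cc k) ∘ (vv k) = ⇑(Pi.basisFun k (Fin 4)) := by
    funext i j
    simp [cv, Pi.basisFun_apply, Pi.single_apply, eq_comm]
  rw [he]
  exact (Pi.basisFun k (Fin 4)).linearIndependent

lemma BB_eq (i : Fin 4) : BB k i = vv k i := Module.Basis.mk_apply _ _ _

def TT : OO k →ₗ[k] OO k :=
  ∑ i : Fin 4, ((LinearMap.proj i).comp (cc k)).smulRight (vv k i)

lemma TT_eq_id : TT k = LinearMap.id := by
  apply Module.Basis.ext (BB k)
  intro j
  rw [BB_eq]
  simp only [TT, LinearMap.coe_sum, Finset.sum_apply, LinearMap.smulRight_apply,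
    LinearMap.comp_apply, LinearMap.proj_apply, LinearMap.id_apply, cv]
  rw [Fin.sum_univ_four]
  fin_cases j <;> simp

lemma expand (z : OO k) :
    z = cc k z 0 • vv k 0 + cc k z 1 • vv k 1 + cc k z 2 • vv k 2 + cc k z 3 • vv k 3 := by
  conv_lhs => rw [← LinearMap.id_apply (R := k) z, ← TT_eq_id]
  simp only [TT, LinearMap.coe_sum, Finset.sum_apply, LinearMap.smulRight_apply,
    LinearMap.comp_apply, LinearMap.proj_apply]
  rw [Fin.sum_univ_four]

lemma vv0 : vv k 0 = 1 := rfl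
lemma vv1 : vv k 1 = xx k := rfl
lemma vv2 : vv k 2 = yy k := rfl
lemma vv3 : vv k 3 = xx k * yy k := rfl

variable [CharP k 2]

lemma two_eq_zero : (2 : k) = 0 := by exact_mod_cast CharP.cast_eq_zero k 2

lemma add_self (z : OO k) : z + z = 0 := by
  rw [← two_smul k z, two_eq_zero, zero_smul]

lemma c_mul_x (u : OO k) : cc k (xx k * u) = ![0, cc k u 0, 0, cc k u 2] := by
  have hmul : xx k * u
      = cc k u 0 • xx k + cc k u 2 • (xx k * yy k) := by
    conv_lhs => rw [expand k u]
    rw [vv0, vv1, vv2, vv3]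
    rw [mul_add, mul_add, mul_add]
    rw [mul_smul_comm, mul_smul_comm, mul_smul_comm, mul_smul_comm]
    rw [mul_one, x_sq, ← mul_assoc, x_sq, zero_mul, smul_zero, smul_zero]
    abel
  rw [hmul, map_add, map_smul, map_smul]
  funext j
  have h1 := cv k 1 j
  have h3 := cv k 3 j
  rw [vv1] at h1; rw [vv3] at h3
  fin_cases j <;>
    simp_all <;> simp [Pi.add_apply, Pi.smul_apply, h1, h3]

lemma c_mul_y (u : OO k) : cc k (yy k * u) = ![0, 0, cc k u 0, cc k u 1] := by
  have hmul : yy k * u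
      = cc k u 0 • yy k + cc k u 1 • (xx k * yy k) := by
    conv_lhs => rw [expand k u]
    rw [vv0, vv1, vv2, vv3]
    rw [mul_add, mul_add, mul_add]
    rw [mul_smul_comm, mul_smul_comm, mul_smul_comm, mul_smul_comm]
    rw [mul_one, y_sq, mul_comm (yy k) (xx k * yy k), mul_assoc, y_sq, mul_zero,
      smul_zero, smul_zero, mul_comm (yy k) (xx k)]
    abel
  rw [hmul, map_add, map_smul, map_smul]
  funext j
  have h2 := cv k 2 j
  have h3 := cv k 3 j
  rw [vv2] at h2; rw [vv3] at h3
  fin_cases j <;>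
    simp_all <;> simp [Pi.add_apply, Pi.smul_apply, h2, h3]

lemma h2O : (2 : OO k) = 0 := by
  rw [show (2 : OO k) = algebraMap k (OO k) 2 from (map_ofNat _ 2).symm, two_eq_zero, map_zero]

lemma x_xy : xx k * (xx k * yy k) = 0 := by rw [← mul_assoc, x_sq, zero_mul]
lemma y_xy : yy k * (xx k * yy k) = 0 := by
  rw [mul_comm (xx k), ← mul_assoc, y_sq, zero_mul]
lemma xy_x : (xx k * yy k) * xx k = 0 := by rw [mul_comm, x_xy]
lemma xy_y : (xx k * yy k) * yy k = 0 := by rw [mul_comm, y_xy]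
lemma xy_xy : (xx k * yy k) * (xx k * yy k) = 0 := by
  rw [mul_assoc, y_xy, mul_zero]

def Dlin (a b : OO k) : OO k →ₗ[k] OO k :=
  (BB k).constr k ![0, a, b, xx k * b + yy k * a]

lemma Dlin_vv (a b : OO k) (i : Fin 4) :
    Dlin k a b (vv k i) = ![0, a, b, xx k * b + yy k * a] i := by
  rw [← BB_eq, Dlin, Module.Basis.constr_basis]

lemma Dlin_one (a b : OO k) : Dlin k a b 1 = 0 := Dlin_vv k a b 0
lemma Dlin_x (a b : OO k) : Dlin k a b (xx k) = a := Dlin_vv k a b 1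
lemma Dlin_y (a b : OO k) : Dlin k a b (yy k) = b := Dlin_vv k a b 2
lemma Dlin_xy (a b : OO k) :
    Dlin k a b (xx k * yy k) = xx k * b + yy k * a := Dlin_vv k a b 3

lemma Dlin_leibniz (a b u v : OO k) :
    Dlin k a b (u * v) = u * Dlin k a b v + v * Dlin k a b u := by
  have h : (LinearMap.mul k (OO k)).compr₂ (Dlin k a b)
      = (LinearMap.mul k (OO k)).compl₂ (Dlin k a b)
        + ((LinearMap.mul k (OO k)).compl₂ (Dlin k a b)).flip := by
    apply LinearMap.ext_basis (BB k) (BB k)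
    intro i j
    simp only [LinearMap.compr₂_apply, LinearMap.mul_apply', LinearMap.add_apply,
      LinearMap.compl₂_apply, LinearMap.flip_apply, BB_eq]
    fin_cases i <;> fin_cases j <;>
      simp [vv, Dlin_one, Dlin_x, Dlin_y, Dlin_xy, x_sq, y_sq, x_xy, y_xy, xy_x, xy_y,
        xy_xy, mul_comm (yy k) (xx k)] <;>
      first
        | linear_combination (norm := ring1) (-(xx k * a)) * h2O k
        | linear_combination (norm := ring1) (-(yy k * b)) * h2O k
        | linear_combination (norm := ring1) (-b) * x_sq k + (-(xx k * yy k * a)) * h2O k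
        | linear_combination (norm := ring1) (-a) * y_sq k + (-(yy k * xx k * b)) * h2O k
        | linear_combination (norm := ring1) (-a) * y_sq k + (-(xx k * yy k * b)) * h2O k
        | linear_combination (norm := ring1)
            (xx k * yy k * yy k * a + xx k * xx k * yy k * b) * h2O k
        | linear_combination (norm := ring1)
            (-(xx k * yy k * yy k * a + xx k * xx k * yy k * b)) * h2O k
        | linear_combination (norm := ring1)
            (2 * (xx k * yy k * yy k * a + xx k * xx k * yy k * b)) * h2O k
        | linear_combination (norm := ring1)
            (-(2 * (xx k * yy k * yy k * a + xx k * xx k * yy k * b))) * h2O k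
        | linear_combination (norm := ring1) (0 : OO k) * h2O k
  have := DFunLike.congr_fun (DFunLike.congr_fun h u) v
  simpa only [LinearMap.compr₂_apply, LinearMap.mul_apply', LinearMap.add_apply,
    LinearMap.compl₂_apply, LinearMap.flip_apply] using this

def DD (a b : OO k) : WittJacobson k 2 where
  toLinearMap := Dlin k a b
  map_one_eq_zero' := Dlin_one k a b
  leibniz' u v := by
    rw [smul_eq_mul, smul_eq_mul]
    exact Dlin_leibniz k a b u v

lemma DD_x (a b : OO k) : DD k a b (xx k) = a := Dlin_x k a b
lemma DD_y (a b : OO k) : DD k a b (yy k) = b := Dlin_y k a b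

lemma derivation_ext (D1 D2 : WittJacobson k 2)
    (hx : D1 (xx k) = D2 (xx k)) (hy : D1 (yy k) = D2 (yy k)) : D1 = D2 := by
  apply Derivation.ext
  have h : D1.toLinearMap = D2.toLinearMap := by
    apply Module.Basis.ext (BB k)
    intro i
    rw [BB_eq]
    fin_cases i
    · show D1.toLinearMap (vv k 0) = D2.toLinearMap (vv k 0)
      rw [vv0]
      show D1 1 = D2 1
      rw [Derivation.map_one_eq_zero, Derivation.map_one_eq_zero]
    · exact hx
    · exact hy
    · show D1.toLinearMap (vv k 3) = D2.toLinearMap (vv k 3)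
      rw [vv3]
      show D1 (xx k * yy k) = D2 (xx k * yy k)
      rw [Derivation.leibniz, Derivation.leibniz, hx, hy]
  intro z
  exact DFunLike.congr_fun h z

lemma D_apply (D : WittJacobson k 2) (z : OO k) :
    D z = cc k z 1 • D (xx k) + cc k z 2 • D (yy k)
      + cc k z 3 • (xx k * D (yy k) + yy k * D (xx k)) := by
  conv_lhs => rw [expand k z]
  rw [vv0, vv1, vv2, vv3]
  rw [map_add, map_add, map_add, Derivation.map_smul, Derivation.map_smul,
    Derivation.map_smul, Derivation.map_smul]
  rw [Derivation.map_one_eq_zero, Derivation.leibniz]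
  rw [smul_eq_mul, smul_eq_mul]
  rw [smul_zero, zero_add]

lemma cD_apply (D : WittJacobson k 2) (z : OO k) :
    cc k (D z) = cc k z 1 • cc k (D (xx k)) + cc k z 2 • cc k (D (yy k))
      + cc k z 3 • (![0, cc k (D (yy k)) 0, 0, cc k (D (yy k)) 2]
          + ![0, 0, cc k (D (xx k)) 0, cc k (D (xx k)) 1]) := by
  rw [D_apply k D z, map_add, map_add, map_smul, map_smul, map_smul, map_add,
    c_mul_x, c_mul_y]

lemma cD_entry (D : WittJacobson k 2) (z : OO k) (j : Fin 4) :
    cc k (D z) j = cc k z 1 * cc k (D (xx k)) j + cc k z 2 * cc k (D (yy k)) j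
      + cc k z 3 * (![0, cc k (D (yy k)) 0, cc k (D (xx k)) 0,
          cc k (D (yy k)) 2 + cc k (D (xx k)) 1] j) := by
  have h := congrFun (cD_apply k D z) j
  simp only [Pi.add_apply, Pi.smul_apply, smul_eq_mul] at h
  rw [h]
  congr 1
  congr 1
  fin_cases j <;> simp

def mat (D : WittJacobson k 2) : Matrix (Fin 3) (Fin 3) k :=
  !![cc k (D (xx k)) 1, cc k (D (xx k)) 2, cc k (D (xx k)) 3;
     cc k (D (yy k)) 1, cc k (D (yy k)) 2, cc k (D (yy k)) 3;
     cc k (D (yy k)) 0, cc k (D (xx k)) 0, cc k (D (xx k)) 1 + cc k (D (yy k)) 2]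

lemma mat_mem (D : WittJacobson k 2) : mat k D ∈ LieAlgebra.SpecialLinear.sl (Fin 3) k := by
  show mat k D ∈ LinearMap.ker (Matrix.traceLinearMap (Fin 3) k k)
  rw [LinearMap.mem_ker, Matrix.traceLinearMap_apply, Matrix.trace, Fin.sum_univ_three]
  simp [mat]
  linear_combination (cc k (D (xx k)) 1 + cc k (D (yy k)) 2) * two_eq_zero k

lemma cc_comb (s t u w : k) :
    cc k (s • (1 : OO k) + t • xx k + u • yy k + w • (xx k * yy k)) = ![s, t, u, w] := by
  rw [map_add, map_add, map_add, map_smul, map_smul, map_smul, map_smul]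
  funext j
  have h0 := cv k 0 j
  have h1 := cv k 1 j
  have h2 := cv k 2 j
  have h3 := cv k 3 j
  rw [vv0] at h0; rw [vv1] at h1; rw [vv2] at h2; rw [vv3] at h3
  fin_cases j <;> simp_all

def aof (A : Matrix (Fin 3) (Fin 3) k) : OO k :=
  A 2 1 • (1 : OO k) + A 0 0 • xx k + A 0 1 • yy k + A 0 2 • (xx k * yy k)

def bof (A : Matrix (Fin 3) (Fin 3) k) : OO k :=
  A 2 0 • (1 : OO k) + A 1 0 • xx k + A 1 1 • yy k + A 1 2 • (xx k * yy k)

lemma cc_aof (A : Matrix (Fin 3) (Fin 3) k) :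
    cc k (aof k A) = ![A 2 1, A 0 0, A 0 1, A 0 2] := cc_comb k _ _ _ _

lemma cc_bof (A : Matrix (Fin 3) (Fin 3) k) :
    cc k (bof k A) = ![A 2 0, A 1 0, A 1 1, A 1 2] := cc_comb k _ _ _ _

noncomputable def theEquiv :
    WittJacobson k 2 ≃ₗ⁅k⁆ ↥(LieAlgebra.SpecialLinear.sl (Fin 3) k) where
  toFun D := ⟨mat k D, mat_mem k D⟩
  map_add' D E := by
    apply Subtype.ext
    show mat k (D + E) = mat k D + mat k E
    ext i j
    fin_cases i <;> fin_cases j <;>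
      simp [mat, Derivation.add_apply, map_add] <;> ring
  map_smul' t D := by
    apply Subtype.ext
    show mat k (t • D) = t • mat k D
    ext i j
    fin_cases i <;> fin_cases j <;>
      simp [mat, Derivation.smul_apply, map_smul] <;> ring
  map_lie' {D E} := by
    apply Subtype.ext
    show mat k ⁅D, E⁆ = mat k D * mat k E - mat k E * mat k D
    have hx : cc k (⁅D, E⁆ (xx k)) = cc k (D (E (xx k))) - cc k (E (D (xx k))) := by
      rw [Derivation.commutator_apply, map_sub]
    have hy : cc k (⁅D, E⁆ (yy k)) = cc k (D (E (yy k))) - cc k (E (D (yy k))) := by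
      rw [Derivation.commutator_apply, map_sub]
    refine Matrix.ext ?_
    intro i j
    fin_cases i <;> fin_cases j
    · simp [mat, Matrix.mul_apply, Fin.sum_univ_three, hx, hy, Pi.sub_apply,
        cD_entry k D (E (xx k)), cD_entry k E (D (xx k)),
        cD_entry k D (E (yy k)), cD_entry k E (D (yy k))]
      first
        | linear_combination (norm := ring1) ((-(cc k (D (xx k)) 2 * cc k (E (yy k)) 1) - cc k (D (xx k)) 3 * cc k (E (yy k)) 0 + cc k (D (yy k)) 0 * cc k (E (xx k)) 3 + cc k (D (yy k)) 1 * cc k (E (xx k)) 2)) * two_eq_zero k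
        | linear_combination (norm := ring1) (-(-(cc k (D (xx k)) 2 * cc k (E (yy k)) 1) - cc k (D (xx k)) 3 * cc k (E (yy k)) 0 + cc k (D (yy k)) 0 * cc k (E (xx k)) 3 + cc k (D (yy k)) 1 * cc k (E (xx k)) 2)) * two_eq_zero k
        | linear_combination (norm := ring1) (0 : k) * two_eq_zero k
    · simp [mat, Matrix.mul_apply, Fin.sum_univ_three, hx, hy, Pi.sub_apply,
        cD_entry k D (E (xx k)), cD_entry k E (D (xx k)),
        cD_entry k D (E (yy k)), cD_entry k E (D (yy k))]
      first
        | linear_combination (norm := ring1) ((cc k (D (xx k)) 0 * cc k (E (xx k)) 3 - cc k (D (xx k)) 1 * cc k (E (xx k)) 2 + cc k (D (xx k)) 2 * cc k (E (xx k)) 1 - cc k (D (xx k)) 2 * cc k (E (yy k)) 2 - cc k (D (xx k)) 3 * cc k (E (xx k)) 0 + cc k (D (yy k)) 2 * cc k (E (xx k)) 2)) * two_eq_zero k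
        | linear_combination (norm := ring1) (-(cc k (D (xx k)) 0 * cc k (E (xx k)) 3 - cc k (D (xx k)) 1 * cc k (E (xx k)) 2 + cc k (D (xx k)) 2 * cc k (E (xx k)) 1 - cc k (D (xx k)) 2 * cc k (E (yy k)) 2 - cc k (D (xx k)) 3 * cc k (E (xx k)) 0 + cc k (D (yy k)) 2 * cc k (E (xx k)) 2)) * two_eq_zero k
        | linear_combination (norm := ring1) (0 : k) * two_eq_zero k
    · simp [mat, Matrix.mul_apply, Fin.sum_univ_three, hx, hy, Pi.sub_apply,
        cD_entry k D (E (xx k)), cD_entry k E (D (xx k)),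
        cD_entry k D (E (yy k)), cD_entry k E (D (yy k))]
      first
        | linear_combination (norm := ring1) ((-(cc k (D (xx k)) 2 * cc k (E (yy k)) 3) - cc k (D (xx k)) 3 * cc k (E (yy k)) 2 + cc k (D (yy k)) 2 * cc k (E (xx k)) 3 + cc k (D (yy k)) 3 * cc k (E (xx k)) 2)) * two_eq_zero k
        | linear_combination (norm := ring1) (-(-(cc k (D (xx k)) 2 * cc k (E (yy k)) 3) - cc k (D (xx k)) 3 * cc k (E (yy k)) 2 + cc k (D (yy k)) 2 * cc k (E (xx k)) 3 + cc k (D (yy k)) 3 * cc k (E (xx k)) 2)) * two_eq_zero k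
        | linear_combination (norm := ring1) (0 : k) * two_eq_zero k
    · simp [mat, Matrix.mul_apply, Fin.sum_univ_three, hx, hy, Pi.sub_apply,
        cD_entry k D (E (xx k)), cD_entry k E (D (xx k)),
        cD_entry k D (E (yy k)), cD_entry k E (D (yy k))]
      first
        | linear_combination (norm := ring1) ((cc k (D (xx k)) 1 * cc k (E (yy k)) 1 + cc k (D (yy k)) 0 * cc k (E (yy k)) 3 - cc k (D (yy k)) 1 * cc k (E (xx k)) 1 + cc k (D (yy k)) 1 * cc k (E (yy k)) 2 - cc k (D (yy k)) 2 * cc k (E (yy k)) 1 - cc k (D (yy k)) 3 * cc k (E (yy k)) 0)) * two_eq_zero k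
        | linear_combination (norm := ring1) (-(cc k (D (xx k)) 1 * cc k (E (yy k)) 1 + cc k (D (yy k)) 0 * cc k (E (yy k)) 3 - cc k (D (yy k)) 1 * cc k (E (xx k)) 1 + cc k (D (yy k)) 1 * cc k (E (yy k)) 2 - cc k (D (yy k)) 2 * cc k (E (yy k)) 1 - cc k (D (yy k)) 3 * cc k (E (yy k)) 0)) * two_eq_zero k
        | linear_combination (norm := ring1) (0 : k) * two_eq_zero k
    · simp [mat, Matrix.mul_apply, Fin.sum_univ_three, hx, hy, Pi.sub_apply,
        cD_entry k D (E (xx k)), cD_entry k E (D (xx k)),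
        cD_entry k D (E (yy k)), cD_entry k E (D (yy k))]
      first
        | linear_combination (norm := ring1) ((cc k (D (xx k)) 0 * cc k (E (yy k)) 3 + cc k (D (xx k)) 2 * cc k (E (yy k)) 1 - cc k (D (yy k)) 1 * cc k (E (xx k)) 2 - cc k (D (yy k)) 3 * cc k (E (xx k)) 0)) * two_eq_zero k
        | linear_combination (norm := ring1) (-(cc k (D (xx k)) 0 * cc k (E (yy k)) 3 + cc k (D (xx k)) 2 * cc k (E (yy k)) 1 - cc k (D (yy k)) 1 * cc k (E (xx k)) 2 - cc k (D (yy k)) 3 * cc k (E (xx k)) 0)) * two_eq_zero k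
        | linear_combination (norm := ring1) (0 : k) * two_eq_zero k
    · simp [mat, Matrix.mul_apply, Fin.sum_univ_three, hx, hy, Pi.sub_apply,
        cD_entry k D (E (xx k)), cD_entry k E (D (xx k)),
        cD_entry k D (E (yy k)), cD_entry k E (D (yy k))]
      first
        | linear_combination (norm := ring1) ((cc k (D (xx k)) 1 * cc k (E (yy k)) 3 + cc k (D (xx k)) 3 * cc k (E (yy k)) 1 - cc k (D (yy k)) 1 * cc k (E (xx k)) 3 - cc k (D (yy k)) 3 * cc k (E (xx k)) 1)) * two_eq_zero k
        | linear_combination (norm := ring1) (-(cc k (D (xx k)) 1 * cc k (E (yy k)) 3 + cc k (D (xx k)) 3 * cc k (E (yy k)) 1 - cc k (D (yy k)) 1 * cc k (E (xx k)) 3 - cc k (D (yy k)) 3 * cc k (E (xx k)) 1)) * two_eq_zero k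
        | linear_combination (norm := ring1) (0 : k) * two_eq_zero k
    · simp [mat, Matrix.mul_apply, Fin.sum_univ_three, hx, hy, Pi.sub_apply,
        cD_entry k D (E (xx k)), cD_entry k E (D (xx k)),
        cD_entry k D (E (yy k)), cD_entry k E (D (yy k))]
      first
        | linear_combination (norm := ring1) ((cc k (D (yy k)) 0 * cc k (E (yy k)) 2 - cc k (D (yy k)) 2 * cc k (E (yy k)) 0)) * two_eq_zero k
        | linear_combination (norm := ring1) (-(cc k (D (yy k)) 0 * cc k (E (yy k)) 2 - cc k (D (yy k)) 2 * cc k (E (yy k)) 0)) * two_eq_zero k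
        | linear_combination (norm := ring1) (0 : k) * two_eq_zero k
    · simp [mat, Matrix.mul_apply, Fin.sum_univ_three, hx, hy, Pi.sub_apply,
        cD_entry k D (E (xx k)), cD_entry k E (D (xx k)),
        cD_entry k D (E (yy k)), cD_entry k E (D (yy k))]
      first
        | linear_combination (norm := ring1) ((cc k (D (xx k)) 0 * cc k (E (xx k)) 1 - cc k (D (xx k)) 1 * cc k (E (xx k)) 0)) * two_eq_zero k
        | linear_combination (norm := ring1) (-(cc k (D (xx k)) 0 * cc k (E (xx k)) 1 - cc k (D (xx k)) 1 * cc k (E (xx k)) 0)) * two_eq_zero k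
        | linear_combination (norm := ring1) (0 : k) * two_eq_zero k
    · simp [mat, Matrix.mul_apply, Fin.sum_univ_three, hx, hy, Pi.sub_apply,
        cD_entry k D (E (xx k)), cD_entry k E (D (xx k)),
        cD_entry k D (E (yy k)), cD_entry k E (D (yy k))]
      first
        | linear_combination (norm := ring1) ((0 : k)) * two_eq_zero k
        | linear_combination (norm := ring1) (-(0 : k)) * two_eq_zero k
        | linear_combination (norm := ring1) (0 : k) * two_eq_zero k
  invFun A := DD k (aof k A.1) (bof k A.1)
  left_inv D := by
    apply derivation_ext
    · rw [DD_x, aof]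
      have hm : ∀ i j : Fin 3, mat k D i j = mat k D i j := fun _ _ => rfl
      show mat k D 2 1 • (1:OO k) + mat k D 0 0 • xx k + mat k D 0 1 • yy k
          + mat k D 0 2 • (xx k * yy k) = D (xx k)
      simp only [mat, Matrix.of_apply, Matrix.cons_val', Matrix.cons_val_zero,
        Matrix.cons_val_one, Matrix.head_cons, Matrix.empty_val', Matrix.cons_val_fin_one,
        Matrix.head_fin_const, Matrix.cons_val_two, Matrix.tail_cons]
      conv_rhs => rw [expand k (D (xx k))]
      rw [vv0, vv1, vv2, vv3]
    · rw [DD_y, bof]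
      show mat k D 2 0 • (1:OO k) + mat k D 1 0 • xx k + mat k D 1 1 • yy k
          + mat k D 1 2 • (xx k * yy k) = D (yy k)
      simp only [mat, Matrix.of_apply, Matrix.cons_val', Matrix.cons_val_zero,
        Matrix.cons_val_one, Matrix.head_cons, Matrix.empty_val', Matrix.cons_val_fin_one,
        Matrix.head_fin_const, Matrix.cons_val_two, Matrix.tail_cons]
      conv_rhs => rw [expand k (D (yy k))]
      rw [vv0, vv1, vv2, vv3]
  right_inv A := by
    apply Subtype.ext
    have ht : Matrix.trace A.1 = 0 := A.2
    rw [Matrix.trace, Fin.sum_univ_three] at ht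
    show mat k (DD k (aof k A.1) (bof k A.1)) = A.1
    ext i j
    fin_cases i <;> fin_cases j <;>
      simp [mat, DD_x, DD_y, cc_aof, cc_bof] <;>
      first
        | rfl
        | (simp only [Matrix.diag_apply] at ht;
           linear_combination ht - A.1 2 2 * two_eq_zero k)

end
end WJ2

/-- In characteristic `2`, the Witt–Jacobson algebra
`W(2;1) = Der (k[X,Y]/(X²,Y²))` is isomorphic to `sl₃(k)` as a Lie algebra over `k`. -/
theorem wittJacobson_char_two_iso_sl3
    (k : Type) [Field k] [IsAlgClosed k] [CharP k 2] :
    Nonempty (WittJacobson k 2 ≃ₗ⁅k⁆ ↥(LieAlgebra.SpecialLinear.sl (Fin 3) k)) :=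
  ⟨WJ2.theEquiv k⟩
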